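/- Let A ⊊ [m] with m + |A| ≥ 2 and D = F_2^m + wΔ_A ⊆ F_4^m. Then C_{D^*} is a quaternary code of length 2^{m+|A|} − 1 with exactly 4^m distinct codewords (dimension m over F_4) and minimum distance 2^{m+|A|−1}, and the multiset {wt(c_{D^*}(x)) : x ∈ F_4^m} consists of: 0 once; 2^{m+|A|−1} with multiplicity 3(2^{m−|A|} − 1); and 3·2^{m+|A|−2} with multiplicity 4^m − 1 − 3(2^{m−|A|} − 1). In particular C_{D^*} is a two-weight code. -/

import Mathlib

open Finset

/-- The support of a binary vector, as a finset of coordinates. -/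
def supp {m : ℕ} (v : Fin m → ZMod 2) : Finset (Fin m) :=
  Finset.univ.filter (fun i => v i ≠ 0)

/-- The simplicial complex generated by `A`: all binary vectors with support contained in `A`. -/
def delta {m : ℕ} (A : Finset (Fin m)) : Finset (Fin m → ZMod 2) :=
  Finset.univ.filter (fun v => supp v ⊆ A)

variable {F : Type} [Field F] [Fintype F] [DecidableEq F]

/-- The embedding of `F_2 = {0,1}` into a field `F`. -/
def e2 (a : ZMod 2) : F := (a.val : F)

/-- The inner product `x·d = Σ x_i d_i` of two vectors over `F`. -/
def dotF {m : ℕ} (x d : Fin m → F) : F := ∑ i, x i * d i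

/-- The quaternary vector `d_1 + w·d_2` attached to a pair of binary vectors. -/
def dvec {m : ℕ} (w : F) (p : (Fin m → ZMod 2) × (Fin m → ZMod 2)) : Fin m → F :=
  fun i => e2 (p.1 i) + w * e2 (p.2 i)

/-- The Hamming weight of the codeword `c_D(x) = (x·d)_{d∈D}`. -/
def wtF {m : ℕ} (D : Finset (Fin m → F)) (x : Fin m → F) : ℕ :=
  (D.filter (fun d => dotF x d ≠ 0)).card

/-- The codeword `c_D(x) = (x·d)_{d∈D}` of the code with defining set `D`. -/
def codeword {m : ℕ} (D : Finset (Fin m → F)) (x : Fin m → F) : {d // d ∈ D} → F :=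
  fun d => dotF x d.1

/-! ### auxiliary -/

def dot2 {m : ℕ} (x d : Fin m → ZMod 2) : ZMod 2 := ∑ i, x i * d i

lemma zmod2cases : ∀ x : ZMod 2, x = 0 ∨ x = 1 := by decide

lemma zmod2_add_eq_zero : ∀ u v : ZMod 2, u + v = 0 ↔ u = v := by decide

omit [DecidableEq F] in
lemma char2 (hF : Fintype.card F = 4) : (1 : F) + 1 = 0 := by
  have h4 : ((4 : ℕ) : F) = 0 := by rw [← hF]; exact FiniteField.cast_card_eq_zero F
  have h : ((2:F)) * 2 = 0 := by push_cast at h4; linear_combination h4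
  rcases mul_eq_zero.mp h with h | h <;> linear_combination h

omit [Fintype F] [DecidableEq F] in
lemma e2_zero : (e2 0 : F) = 0 := by simp [e2]

omit [Fintype F] [DecidableEq F] in
lemma e2_one : (e2 1 : F) = 1 := by
  rw [e2, show (1 : ZMod 2).val = 1 from rfl, Nat.cast_one]

omit [Fintype F] [DecidableEq F] in
lemma e2_add (h2 : (1:F) + 1 = 0) (x y : ZMod 2) : (e2 (x + y) : F) = e2 x + e2 y := by
  rcases zmod2cases x with rfl | rfl <;> rcases zmod2cases y with rfl | rfl
  · simp [e2_zero]
  · simp [e2_zero]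
  · simp [e2_zero]
  · rw [show (1 + 1 : ZMod 2) = 0 by decide, e2_zero, e2_one]; exact h2.symm

omit [Fintype F] [DecidableEq F] in
lemma e2_mul (x y : ZMod 2) : (e2 (x * y) : F) = e2 x * e2 y := by
  rcases zmod2cases x with rfl | rfl <;> rcases zmod2cases y with rfl | rfl <;>
    simp only [mul_zero, zero_mul, mul_one, one_mul, e2_zero, e2_one]

omit [Fintype F] [DecidableEq F] in
lemma e2_sum (h2 : (1:F) + 1 = 0) {ι : Type} (s : Finset ι) (f : ι → ZMod 2) :
    (e2 (∑ i ∈ s, f i) : F) = ∑ i ∈ s, e2 (f i) := by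
  induction s using Finset.cons_induction with
  | empty => simp [e2]
  | cons a s ha ih => rw [Finset.sum_cons, Finset.sum_cons, e2_add h2, ih]

omit [DecidableEq F] in
lemma wsq (hF : Fintype.card F = 4) (w : F) (hw : w ^ 2 + w + 1 = 0) : w * w = w + 1 := by
  linear_combination hw - (w + 1) * (char2 hF)

omit [Fintype F] [DecidableEq F] in
lemma w_ne_zero (w : F) (hw : w ^ 2 + w + 1 = 0) : w ≠ 0 := by
  intro h; rw [h] at hw; simp at hw

omit [DecidableEq F] in
lemma w_ne_one (hF : Fintype.card F = 4) (w : F) (hw : w ^ 2 + w + 1 = 0) : w ≠ 1 := by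
  intro h; rw [h] at hw
  exact one_ne_zero (α := F) (by linear_combination hw - char2 hF)

omit [DecidableEq F] in
lemma pair_zero (hF : Fintype.card F = 4) (w : F) (hw : w ^ 2 + w + 1 = 0) (s t : ZMod 2) :
    (e2 s + w * e2 t : F) = 0 ↔ s = 0 ∧ t = 0 := by
  have h2 := char2 hF
  constructor
  · intro h
    rcases zmod2cases s with rfl | rfl <;> rcases zmod2cases t with rfl | rfl
    · exact ⟨rfl, rfl⟩
    · rw [e2_zero, e2_one, zero_add, mul_one] at h; exact absurd h (w_ne_zero w hw)
    · rw [e2_zero, e2_one, mul_zero, add_zero] at h; exact absurd h one_ne_zero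
    · exfalso
      rw [e2_one, mul_one] at h
      exact w_ne_one hF w hw (by linear_combination h - h2)
  · rintro ⟨rfl, rfl⟩; simp [e2]

omit [DecidableEq F] in
lemma dvec_inj {m : ℕ} (hF : Fintype.card F = 4) (w : F) (hw : w ^ 2 + w + 1 = 0) :
    Function.Injective (dvec (m := m) w) := by
  intro p q h
  have h2 := char2 hF
  have key : ∀ i, p.1 i = q.1 i ∧ p.2 i = q.2 i := by
    intro i
    have hi := congrFun h i
    simp only [dvec] at hi
    have h0 : (e2 (p.1 i + q.1 i) + w * e2 (p.2 i + q.2 i) : F) = 0 := by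
      rw [e2_add h2, e2_add h2]
      linear_combination hi + (e2 (q.1 i) + w * e2 (q.2 i) : F) * h2
    obtain ⟨hu, hv⟩ := (pair_zero hF w hw _ _).mp h0
    exact ⟨(zmod2_add_eq_zero _ _).mp hu, (zmod2_add_eq_zero _ _).mp hv⟩
  exact Prod.ext (funext fun i => (key i).1) (funext fun i => (key i).2)

omit [DecidableEq F] in
lemma dvec_bij {m : ℕ} (hF : Fintype.card F = 4) (w : F) (hw : w ^ 2 + w + 1 = 0) :
    Function.Bijective (dvec (m := m) w) := by
  classical
  rw [Fintype.bijective_iff_injective_and_card]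
  refine ⟨dvec_inj hF w hw, ?_⟩
  rw [Fintype.card_prod, Fintype.card_fun, Fintype.card_fun, ZMod.card,
    Fintype.card_fin, hF, show (4:ℕ) = 2 * 2 from rfl, mul_pow]

omit [DecidableEq F] in
lemma prod_decomp (hF : Fintype.card F = 4) (w : F) (hw : w ^ 2 + w + 1 = 0) (x y u v : ZMod 2) :
    (e2 x + w * e2 y) * (e2 u + w * e2 v) =
      (e2 (x * u + y * v) + w * e2 (y * u + (x * v + y * v)) : F) := by
  have h2 := char2 hF
  rw [e2_add h2, e2_add h2, e2_add h2, e2_mul, e2_mul, e2_mul, e2_mul]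
  linear_combination (e2 y * e2 v : F) * wsq hF w hw

omit [DecidableEq F] in
lemma dot_decomp {m : ℕ} (hF : Fintype.card F = 4) (w : F) (hw : w ^ 2 + w + 1 = 0)
    (a b d1 d2 : Fin m → ZMod 2) :
    dotF (dvec w (a, b)) (dvec w (d1, d2)) =
      e2 (dot2 a d1 + dot2 b d2) + w * e2 (dot2 b d1 + (dot2 a d2 + dot2 b d2)) := by
  have h2 := char2 hF
  simp only [dotF, dvec, dot2]
  rw [show (∑ i, (e2 (a i) + w * e2 (b i)) * (e2 (d1 i) + w * e2 (d2 i)) : F)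
      = ∑ i, (e2 (a i * d1 i + b i * d2 i) + w * e2 (b i * d1 i + (a i * d2 i + b i * d2 i)))
    from Finset.sum_congr rfl (fun i _ => prod_decomp hF w hw _ _ _ _)]
  rw [Finset.sum_add_distrib, ← Finset.mul_sum, ← e2_sum h2, ← e2_sum h2,
    Finset.sum_add_distrib, Finset.sum_add_distrib, Finset.sum_add_distrib]

omit [DecidableEq F] in
lemma dot_zero_iff {m : ℕ} (hF : Fintype.card F = 4) (w : F) (hw : w ^ 2 + w + 1 = 0)
    (a b d1 d2 : Fin m → ZMod 2) :
    dotF (dvec w (a, b)) (dvec w (d1, d2)) = 0 ↔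
      (dot2 a d1 + dot2 b d2 = 0 ∧ dot2 b d1 + dot2 (a + b) d2 = 0) := by
  rw [dot_decomp hF w hw, pair_zero hF w hw]
  have : dot2 (a + b) d2 = dot2 a d2 + dot2 b d2 := by
    simp only [dot2, Pi.add_apply, add_mul, Finset.sum_add_distrib]
  rw [this]

/-- fibers of a surjective additive map all have the same size. -/
lemma card_fiber {α β : Type} [AddCommGroup α] [Fintype α] [AddCommGroup β] [Fintype β]
    [DecidableEq β] (L : α → β) (hadd : ∀ x y, L (x + y) = L x + L y)
    (hs : Function.Surjective L) (v : β) :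
    (Finset.univ.filter fun d => L d = v).card * Fintype.card β = Fintype.card α := by
  have hzero : L 0 = 0 := by
    have h := hadd 0 0
    rw [add_zero] at h
    have h2 : L 0 + L 0 = L 0 + 0 := by rw [add_zero]; exact h.symm
    exact add_left_cancel h2
  have hneg : ∀ x, L (-x) = - L x := by
    intro x
    have h := hadd x (-x)
    rw [add_neg_cancel, hzero] at h
    exact neg_eq_of_add_eq_zero_right h.symm |>.symm
  have hsub : ∀ x y, L (x - y) = L x - L y := by
    intro x y
    rw [sub_eq_add_neg, hadd, hneg, sub_eq_add_neg]
  have h0 : ∀ u : β, (Finset.univ.filter fun d => L d = u).card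
      = (Finset.univ.filter fun d => L d = 0).card := by
    intro u
    obtain ⟨d0, hd0⟩ := hs u
    apply Finset.card_nbij' (fun d => d - d0) (fun d => d + d0)
    · intro a ha
      rw [Finset.mem_coe, Finset.mem_filter] at ha ⊢
      exact ⟨Finset.mem_univ _, by rw [hsub, ha.2, hd0, sub_self]⟩
    · intro a ha
      rw [Finset.mem_coe, Finset.mem_filter] at ha ⊢
      exact ⟨Finset.mem_univ _, by rw [hadd, ha.2, hd0, zero_add]⟩
    · intro a _; simp
    · intro a _; simp
  have htot : Fintype.card α = ∑ u : β, (Finset.univ.filter fun d => L d = u).card := by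
    rw [← Finset.card_univ]
    exact Finset.card_eq_sum_card_fiberwise (fun x _ => Finset.mem_univ _)
  calc (Finset.univ.filter fun d => L d = v).card * Fintype.card β
      = (Finset.univ.filter fun d => L d = 0).card * Fintype.card β := by rw [h0 v]
    _ = ∑ _u : β, (Finset.univ.filter fun d => L d = 0).card := by
        rw [Finset.sum_const, Finset.card_univ, smul_eq_mul, mul_comm]
    _ = ∑ u : β, (Finset.univ.filter fun d => L d = u).card :=
        Finset.sum_congr rfl (fun u _ => (h0 u).symm)
    _ = Fintype.card α := htot.symm

lemma dot2_add_right {m : ℕ} (c x y : Fin m → ZMod 2) :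
    dot2 c (x + y) = dot2 c x + dot2 c y := by
  simp only [dot2, Pi.add_apply, mul_add, Finset.sum_add_distrib]

lemma dot2_single {m : ℕ} (c : Fin m → ZMod 2) (k : Fin m) :
    dot2 c (Pi.single k 1) = c k := by
  simp [dot2, Pi.single_apply, mul_ite]

lemma zmod2_ne_zero (x : ZMod 2) (h : x ≠ 0) : x = 1 := by
  rcases zmod2cases x with rfl | rfl
  · exact absurd rfl h
  · rfl

lemma exists_one_of_ne_zero {m : ℕ} {c : Fin m → ZMod 2} (hc : c ≠ 0) :
    ∃ k, c k = 1 := by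
  by_contra h
  push_neg at h
  exact hc (funext fun i => by
    rcases zmod2cases (c i) with h0 | h1
    · exact h0
    · exact absurd h1 (h i))

lemma card_dot2_fiber {m : ℕ} (hm : 1 ≤ m) {c : Fin m → ZMod 2} (hc : c ≠ 0) (v : ZMod 2) :
    (Finset.univ.filter fun d => dot2 c d = v).card = 2 ^ (m - 1) := by
  obtain ⟨k, hk⟩ := exists_one_of_ne_zero hc
  have hsurj : Function.Surjective (fun d => dot2 c d) := by
    intro u
    rcases zmod2cases u with rfl | rfl
    · exact ⟨0, by simp [dot2]⟩
    · exact ⟨Pi.single k 1, by show dot2 c (Pi.single k 1) = 1; rw [dot2_single, hk]⟩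
  have h := card_fiber (fun d => dot2 c d) (dot2_add_right c) hsurj v
  rw [ZMod.card, Fintype.card_fun, ZMod.card, Fintype.card_fin] at h
  have hp : (2:ℕ) ^ m = 2 ^ (m - 1) * 2 := by
    rw [← pow_succ]; congr 1; omega
  rw [hp] at h
  exact Nat.eq_of_mul_eq_mul_right (by norm_num) h

lemma dot2_comb {m : ℕ} (c u v : Fin m → ZMod 2) (s t : ZMod 2) :
    dot2 c (fun i => s * u i + t * v i) = s * dot2 c u + t * dot2 c v := by
  simp only [dot2]
  rw [Finset.mul_sum, Finset.mul_sum, ← Finset.sum_add_distrib]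
  exact Finset.sum_congr rfl (fun i _ => by ring)

lemma dotpair_surj {m : ℕ} {a b : Fin m → ZMod 2} (ha : a ≠ 0) (hb : b ≠ 0) (hab : a ≠ b) :
    Function.Surjective (fun d => (dot2 a d, dot2 b d) : (Fin m → ZMod 2) → ZMod 2 × ZMod 2) := by
  have key : (∃ u, dot2 a u = 1 ∧ dot2 b u = 0) ∧ (∃ v, dot2 a v = 0 ∧ dot2 b v = 1) := by
    have hj : ∃ j, a j ≠ b j := by
      by_contra h; push_neg at h; exact hab (funext h)
    obtain ⟨j, hj⟩ := hj
    obtain ⟨k, hk⟩ := exists_one_of_ne_zero ha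
    obtain ⟨l, hl⟩ := exists_one_of_ne_zero hb
    rcases zmod2cases (a j) with haj | haj <;> rcases zmod2cases (b j) with hbj | hbj
    · exact absurd (haj.trans hbj.symm) hj
    · -- a j = 0, b j = 1 : v = e_j ; u from k
      refine ⟨?_, ⟨Pi.single j 1, by rw [dot2_single, haj], by rw [dot2_single, hbj]⟩⟩
      rcases zmod2cases (b k) with hbk | hbk
      · exact ⟨Pi.single k 1, by rw [dot2_single, hk], by rw [dot2_single, hbk]⟩
      · refine ⟨Pi.single k 1 + Pi.single j 1, ?_, ?_⟩
        · rw [dot2_add_right, dot2_single, dot2_single, hk, haj]; decide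
        · rw [dot2_add_right, dot2_single, dot2_single, hbk, hbj]; decide
    · -- a j = 1, b j = 0 : u = e_j ; v from l
      refine ⟨⟨Pi.single j 1, by rw [dot2_single, haj], by rw [dot2_single, hbj]⟩, ?_⟩
      rcases zmod2cases (a l) with hal | hal
      · exact ⟨Pi.single l 1, by rw [dot2_single, hal], by rw [dot2_single, hl]⟩
      · refine ⟨Pi.single l 1 + Pi.single j 1, ?_, ?_⟩
        · rw [dot2_add_right, dot2_single, dot2_single, hal, haj]; decide
        · rw [dot2_add_right, dot2_single, dot2_single, hl, hbj]; decide
    · exact absurd (haj.trans hbj.symm) hj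
  obtain ⟨⟨u, hu1, hu2⟩, ⟨v, hv1, hv2⟩⟩ := key
  rintro ⟨s, t⟩
  refine ⟨fun i => s * u i + t * v i, ?_⟩
  simp [dot2_comb, hu1, hu2, hv1, hv2]
lemma card_dot2_fiber2 {m : ℕ} {a b : Fin m → ZMod 2} (ha : a ≠ 0) (hb : b ≠ 0) (hab : a ≠ b)
    (s t : ZMod 2) :
    (Finset.univ.filter fun d => dot2 a d = s ∧ dot2 b d = t).card = 2 ^ (m - 2) := by
  have hadd : ∀ x y : Fin m → ZMod 2,
      ((dot2 a (x + y), dot2 b (x + y)) : ZMod 2 × ZMod 2)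
        = (dot2 a x, dot2 b x) + (dot2 a y, dot2 b y) := by
    intro x y
    simp [dot2_add_right, Prod.ext_iff]
  have h := card_fiber (fun d => ((dot2 a d, dot2 b d) : ZMod 2 × ZMod 2)) hadd
    (dotpair_surj ha hb hab) (s, t)
  rw [Fintype.card_prod, ZMod.card, Fintype.card_fun, ZMod.card, Fintype.card_fin] at h
  have hpred : (Finset.univ.filter fun d => ((dot2 a d, dot2 b d) : ZMod 2 × ZMod 2) = (s, t))
      = (Finset.univ.filter fun d => dot2 a d = s ∧ dot2 b d = t) := by
    apply Finset.filter_congr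
    intro d _
    simp [Prod.ext_iff]
  rw [hpred] at h
  have hm2 : 2 ≤ m := by
    by_contra hm2
    push_neg at hm2
    interval_cases m
    · norm_num at h
    · norm_num at h; omega
  have hp : (2:ℕ) ^ m = 2 ^ (m - 2) * (2 * 2) := by
    rw [← mul_assoc, ← pow_succ, ← pow_succ]; congr 1; omega
  rw [hp] at h
  exact Nat.eq_of_mul_eq_mul_right (by norm_num) h


def extA {m : ℕ} (A : Finset (Fin m)) (σ : {i // i ∈ A} → ZMod 2) : Fin m → ZMod 2 :=
  fun i => if h : i ∈ A then σ ⟨i, h⟩ else 0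

lemma extA_inj {m : ℕ} (A : Finset (Fin m)) : Function.Injective (extA A) := by
  intro σ τ h
  funext ⟨i, hi⟩
  have := congrFun h i
  simpa [extA, hi] using this

lemma extA_image {m : ℕ} (A : Finset (Fin m)) :
    Finset.univ.image (extA A) = delta A := by
  ext v
  simp only [Finset.mem_image, Finset.mem_univ, true_and, delta, Finset.mem_filter]
  constructor
  · rintro ⟨σ, rfl⟩
    intro i hi
    simp only [supp, Finset.mem_filter, Finset.mem_univ, true_and] at hi
    by_contra hiA
    exact hi (by simp [extA, hiA])
  · intro hv
    refine ⟨fun i => v i.1, ?_⟩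
    funext i
    by_cases hiA : i ∈ A
    · simp [extA, hiA]
    · simp only [extA, hiA, dif_neg, not_false_iff]
      by_contra hne
      exact hiA (hv (show i ∈ supp v by
        simp only [supp, Finset.mem_filter, Finset.mem_univ, true_and]
        exact fun h => hne h.symm))

lemma delta_card {m : ℕ} (A : Finset (Fin m)) : (delta A).card = 2 ^ A.card := by
  rw [← extA_image, Finset.card_image_of_injective _ (extA_inj A), Finset.card_univ,
    Fintype.card_fun, ZMod.card, Fintype.card_coe]

lemma zero_mem_delta {m : ℕ} (A : Finset (Fin m)) : 0 ∈ delta A := by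
  simp [delta, supp]

lemma dot2_zero_of_disj {m : ℕ} {A : Finset (Fin m)} {c : Fin m → ZMod 2}
    (hcA : ∀ i ∈ A, c i = 0) {d : Fin m → ZMod 2} (hd : d ∈ delta A) : dot2 c d = 0 := by
  simp only [delta, Finset.mem_filter] at hd
  refine Finset.sum_eq_zero (fun i _ => ?_)
  by_cases hiA : i ∈ A
  · rw [hcA i hiA, zero_mul]
  · have : d i = 0 := by
      by_contra hne
      exact hiA (hd.2 (by simp [supp, Ne, hne] : i ∈ supp d))
    rw [this, mul_zero]

lemma extA_add {m : ℕ} (A : Finset (Fin m)) (x y : {i // i ∈ A} → ZMod 2) :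
    extA A (x + y) = extA A x + extA A y := by
  funext i
  by_cases hiA : i ∈ A <;> simp [extA, hiA]

lemma card_delta_half {m : ℕ} {A : Finset (Fin m)} {c : Fin m → ZMod 2}
    (i0 : Fin m) (hi0 : i0 ∈ A) (hc : c i0 ≠ 0) :
    ((delta A).filter fun d => dot2 c d = 0).card = 2 ^ (A.card - 1) := by
  rw [← extA_image, Finset.filter_image, Finset.card_image_of_injective _ (extA_inj A)]
  have hadd : ∀ x y : {i // i ∈ A} → ZMod 2,
      dot2 c (extA A (x + y)) = dot2 c (extA A x) + dot2 c (extA A y) := by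
    intro x y
    rw [extA_add, dot2_add_right]
  have hsurj : Function.Surjective (fun σ : {i // i ∈ A} → ZMod 2 => dot2 c (extA A σ)) := by
    intro u
    rcases zmod2cases u with rfl | rfl
    · refine ⟨0, ?_⟩
      show dot2 c (extA A 0) = 0
      rw [show extA A (0 : {i // i ∈ A} → ZMod 2) = 0 from funext fun i => by simp [extA]]
      simp [dot2]
    · refine ⟨Pi.single ⟨i0, hi0⟩ 1, ?_⟩
      show dot2 c (extA A (Pi.single ⟨i0, hi0⟩ 1)) = 1
      have hext : extA A (Pi.single (⟨i0, hi0⟩ : {i // i ∈ A}) 1) = Pi.single i0 1 := by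
        funext i
        by_cases hiA : i ∈ A
        · simp [extA, hiA, Pi.single_apply, Subtype.ext_iff]
        · have hne : i ≠ i0 := fun h => hiA (h ▸ hi0)
          simp [extA, hiA, Pi.single_apply, hne]
      rw [hext, dot2_single]
      exact zmod2_ne_zero _ hc
  have h := card_fiber (fun σ : {i // i ∈ A} → ZMod 2 => dot2 c (extA A σ)) hadd hsurj 0
  rw [ZMod.card, Fintype.card_fun, ZMod.card, Fintype.card_coe] at h
  have hA1 : 1 ≤ A.card := Finset.card_pos.mpr ⟨i0, hi0⟩
  have hp : (2:ℕ) ^ A.card = 2 ^ (A.card - 1) * 2 := by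
    rw [← pow_succ]; congr 1; omega
  rw [hp] at h
  exact Nat.eq_of_mul_eq_mul_right (by norm_num) h

lemma wt_erase {m : ℕ} (D : Finset (Fin m → F)) (x : Fin m → F) :
    wtF (D.erase 0) x = wtF D x := by
  unfold wtF
  rw [Finset.filter_erase, Finset.erase_eq_of_notMem]
  rw [Finset.mem_filter]; simp [dotF]

omit [DecidableEq F] in
lemma dvec_zero {m : ℕ} (w : F) : dvec (m := m) w 0 = 0 := by
  funext i
  simp [dvec, e2_zero]

lemma wtD_eq {m : ℕ} (hF : Fintype.card F = 4) (w : F) (hw : w ^ 2 + w + 1 = 0)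
    (A : Finset (Fin m)) (a b : Fin m → ZMod 2) :
    wtF ((Finset.univ ×ˢ delta A).image (dvec w)) (dvec w (a, b))
      = 2 ^ (m + A.card)
        - ((Finset.univ ×ˢ delta A).filter fun p =>
            dot2 a p.1 + dot2 b p.2 = 0 ∧ dot2 b p.1 + dot2 (a + b) p.2 = 0).card := by
  unfold wtF
  rw [Finset.filter_image, Finset.card_image_of_injective _ (dvec_inj hF w hw)]
  have hcongr : ((Finset.univ ×ˢ delta A).filter fun p => dotF (dvec w (a,b)) (dvec w p) ≠ 0)
      = ((Finset.univ ×ˢ delta A).filter fun p =>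
          ¬(dot2 a p.1 + dot2 b p.2 = 0 ∧ dot2 b p.1 + dot2 (a + b) p.2 = 0)) := by
    apply Finset.filter_congr
    rintro ⟨d1, d2⟩ _
    exact not_congr (dot_zero_iff hF w hw a b d1 d2)
  rw [hcongr]
  have hsplit := Finset.card_filter_add_card_filter_not
    (s := (Finset.univ : Finset (Fin m → ZMod 2)) ×ˢ delta A)
    (fun p => dot2 a p.1 + dot2 b p.2 = 0 ∧ dot2 b p.1 + dot2 (a + b) p.2 = 0)
  have hcard : (((Finset.univ : Finset (Fin m → ZMod 2)) ×ˢ delta A)).card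
      = 2 ^ (m + A.card) := by
    rw [Finset.card_product, Finset.card_univ, Fintype.card_fun, ZMod.card, Fintype.card_fin,
      delta_card, pow_add]
  omega


lemma N_indep {m : ℕ} (A : Finset (Fin m)) {a b : Fin m → ZMod 2}
    (ha : a ≠ 0) (hb : b ≠ 0) (hab : a ≠ b) :
    ((Finset.univ ×ˢ delta A).filter fun p =>
        dot2 a p.1 + dot2 b p.2 = 0 ∧ dot2 b p.1 + dot2 (a + b) p.2 = 0).card
      = 2 ^ (A.card + (m - 2)) := by
  rw [Finset.card_filter, Finset.sum_product, Finset.sum_comm]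
  trans ∑ _d2 ∈ delta A, 2 ^ (m - 2)
  · refine Finset.sum_congr rfl fun d2 _ => ?_
    show (∑ d1 : Fin m → ZMod 2,
        if dot2 a d1 + dot2 b d2 = 0 ∧ dot2 b d1 + dot2 (a + b) d2 = 0 then 1 else 0)
      = 2 ^ (m - 2)
    rw [← Finset.card_filter]
    have hcongr : (Finset.univ.filter fun d1 =>
        dot2 a d1 + dot2 b d2 = 0 ∧ dot2 b d1 + dot2 (a + b) d2 = 0)
        = (Finset.univ.filter fun d1 =>
            dot2 a d1 = dot2 b d2 ∧ dot2 b d1 = dot2 (a + b) d2) := by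
      apply Finset.filter_congr
      intro d1 _
      exact and_congr (zmod2_add_eq_zero _ _) (zmod2_add_eq_zero _ _)
    rw [hcongr, card_dot2_fiber2 ha hb hab]
  · rw [Finset.sum_const, delta_card, smul_eq_mul, ← pow_add]

lemma N_diag {m : ℕ} (hm : 1 ≤ m) (A : Finset (Fin m)) {a b c : Fin m → ZMod 2} (hc : c ≠ 0)
    (hcond : ∀ d1 d2 : Fin m → ZMod 2,
      (dot2 a d1 + dot2 b d2 = 0 ∧ dot2 b d1 + dot2 (a + b) d2 = 0)
        ↔ (dot2 c d1 = 0 ∧ dot2 c d2 = 0)) :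
    ((Finset.univ ×ˢ delta A).filter fun p =>
        dot2 a p.1 + dot2 b p.2 = 0 ∧ dot2 b p.1 + dot2 (a + b) p.2 = 0).card
      = ((delta A).filter fun d => dot2 c d = 0).card * 2 ^ (m - 1) := by
  rw [Finset.card_filter, Finset.sum_product, Finset.sum_comm]
  trans ∑ d2 ∈ delta A, if dot2 c d2 = 0 then 2 ^ (m - 1) else 0
  · refine Finset.sum_congr rfl fun d2 _ => ?_
    show (∑ d1 : Fin m → ZMod 2,
        if dot2 a d1 + dot2 b d2 = 0 ∧ dot2 b d1 + dot2 (a + b) d2 = 0 then 1 else 0)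
      = if dot2 c d2 = 0 then 2 ^ (m - 1) else 0
    rw [← Finset.card_filter]
    have hcongr : (Finset.univ.filter fun d1 =>
        dot2 a d1 + dot2 b d2 = 0 ∧ dot2 b d1 + dot2 (a + b) d2 = 0)
        = (Finset.univ.filter fun d1 => dot2 c d1 = 0 ∧ dot2 c d2 = 0) := by
      apply Finset.filter_congr
      intro d1 _
      exact hcond d1 d2
    rw [hcongr]
    by_cases h2 : dot2 c d2 = 0
    · rw [if_pos h2]
      have heq : (Finset.univ.filter fun d1 : Fin m → ZMod 2 => dot2 c d1 = 0 ∧ dot2 c d2 = 0)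
          = (Finset.univ.filter fun d1 => dot2 c d1 = 0) := by
        apply Finset.filter_congr
        intro d1 _
        simp [h2]
      rw [heq, card_dot2_fiber hm hc]
    · rw [if_neg h2]
      rw [Finset.card_eq_zero, Finset.filter_eq_empty_iff]
      intro d1 _
      exact fun hcontra => h2 hcontra.2
  · rw [← Finset.sum_filter, Finset.sum_const, smul_eq_mul]

lemma dot2_zero_left {m : ℕ} (d : Fin m → ZMod 2) : dot2 0 d = 0 := by simp [dot2]

lemma zmod2_self_add (x : ZMod 2) : x + x = 0 := by
  rcases zmod2cases x with rfl | rfl <;> decide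

lemma two_le_of_indep {m : ℕ} {a b : Fin m → ZMod 2} (ha : a ≠ 0) (hb : b ≠ 0)
    (hab : a ≠ b) : 2 ≤ m := by
  by_contra h
  push_neg at h
  obtain ⟨k, hk⟩ := exists_one_of_ne_zero ha
  obtain ⟨l, hl⟩ := exists_one_of_ne_zero hb
  apply hab
  funext i
  have hik : i = k := Fin.ext (by have := i.isLt; have := k.isLt; omega)
  have hil : i = l := Fin.ext (by have := i.isLt; have := l.isLt; omega)
  calc a i = 1 := by rw [hik, hk]
    _ = b i := by rw [hil]; exact hl.symm

/-- the "low weight" class of pairs -/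
def lowP {m : ℕ} (A : Finset (Fin m)) (p : (Fin m → ZMod 2) × (Fin m → ZMod 2)) : Prop :=
  ∃ c, c ≠ 0 ∧ (∀ i ∈ A, c i = 0) ∧ (p = (c, 0) ∨ p = (0, c) ∨ p = (c, c))

lemma wt_of_diag_full {m : ℕ} (hm : 1 ≤ m) (hF : Fintype.card F = 4) (w : F)
    (hw : w ^ 2 + w + 1 = 0) (A : Finset (Fin m)) {a b c : Fin m → ZMod 2} (hc : c ≠ 0)
    (hcA : ∀ i ∈ A, c i = 0)
    (hcond : ∀ d1 d2 : Fin m → ZMod 2,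
      (dot2 a d1 + dot2 b d2 = 0 ∧ dot2 b d1 + dot2 (a + b) d2 = 0)
        ↔ (dot2 c d1 = 0 ∧ dot2 c d2 = 0)) :
    wtF (((Finset.univ ×ˢ delta A).image (dvec w)).erase 0) (dvec w (a, b))
      = 2 ^ (m + A.card - 1) := by
  rw [wt_erase, wtD_eq hF w hw A a b, N_diag hm A hc hcond,
    Finset.filter_eq_self.mpr (fun d hd => dot2_zero_of_disj hcA hd), delta_card]
  have h1 : (2:ℕ) ^ A.card * 2 ^ (m - 1) = 2 ^ (m + A.card - 1) := by
    rw [← pow_add]; congr 1; omega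
  have h2 : (2:ℕ) ^ (m + A.card) = 2 ^ (m + A.card - 1) * 2 := by
    rw [← pow_succ]; congr 1; omega
  omega

lemma wt_of_diag_half {m : ℕ} (hm : 1 ≤ m) (hF : Fintype.card F = 4) (w : F)
    (hw : w ^ 2 + w + 1 = 0) (A : Finset (Fin m)) {a b c : Fin m → ZMod 2}
    (i0 : Fin m) (hi0 : i0 ∈ A) (hci0 : c i0 ≠ 0)
    (hcond : ∀ d1 d2 : Fin m → ZMod 2,
      (dot2 a d1 + dot2 b d2 = 0 ∧ dot2 b d1 + dot2 (a + b) d2 = 0)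
        ↔ (dot2 c d1 = 0 ∧ dot2 c d2 = 0)) :
    wtF (((Finset.univ ×ˢ delta A).image (dvec w)).erase 0) (dvec w (a, b))
      = 3 * 2 ^ (m + A.card - 2) := by
  have hc : c ≠ 0 := fun h => hci0 (by rw [h]; rfl)
  rw [wt_erase, wtD_eq hF w hw A a b, N_diag hm A hc hcond, card_delta_half i0 hi0 hci0]
  have hs1 : 1 ≤ A.card := Finset.card_pos.mpr ⟨i0, hi0⟩
  have h1 : (2:ℕ) ^ (A.card - 1) * 2 ^ (m - 1) = 2 ^ (m + A.card - 2) := by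
    rw [← pow_add]; congr 1; omega
  have h2 : (2:ℕ) ^ (m + A.card) = 2 ^ (m + A.card - 2) * 4 := by
    rw [show (4:ℕ) = 2 ^ 2 from rfl, ← pow_add]; congr 1; omega
  omega

lemma wt_of_indep {m : ℕ} (hF : Fintype.card F = 4) (w : F)
    (hw : w ^ 2 + w + 1 = 0) (A : Finset (Fin m)) {a b : Fin m → ZMod 2}
    (ha : a ≠ 0) (hb : b ≠ 0) (hab : a ≠ b) :
    wtF (((Finset.univ ×ˢ delta A).image (dvec w)).erase 0) (dvec w (a, b))
      = 3 * 2 ^ (m + A.card - 2) := by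
  have hm2 : 2 ≤ m := two_le_of_indep ha hb hab
  rw [wt_erase, wtD_eq hF w hw A a b, N_indep A ha hb hab]
  have h1 : (2:ℕ) ^ (A.card + (m - 2)) = 2 ^ (m + A.card - 2) := by congr 1; omega
  have h2 : (2:ℕ) ^ (m + A.card) = 2 ^ (m + A.card - 2) * 4 := by
    rw [show (4:ℕ) = 2 ^ 2 from rfl, ← pow_add]; congr 1; omega
  omega

lemma wt_of_zero {m : ℕ} (w : F) (A : Finset (Fin m)) :
    wtF (((Finset.univ ×ˢ delta A).image (dvec w)).erase 0) (dvec w (0, 0)) = 0 := by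
  rw [wtF, Finset.card_eq_zero, Finset.filter_eq_empty_iff]
  intro d _
  rw [show dvec w ((0 : Fin m → ZMod 2), (0 : Fin m → ZMod 2)) = 0 from dvec_zero w]
  simp [dotF]

lemma wt_classify {m : ℕ} (hm : 1 ≤ m) (hF : Fintype.card F = 4) (w : F)
    (hw : w ^ 2 + w + 1 = 0) (A : Finset (Fin m))
    (p : (Fin m → ZMod 2) × (Fin m → ZMod 2)) :
    (p = 0 ∧ wtF (((Finset.univ ×ˢ delta A).image (dvec w)).erase 0) (dvec w p) = 0)
    ∨ (lowP A p ∧ wtF (((Finset.univ ×ˢ delta A).image (dvec w)).erase 0) (dvec w p)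
        = 2 ^ (m + A.card - 1))
    ∨ (¬(p = 0 ∨ lowP A p)
        ∧ wtF (((Finset.univ ×ˢ delta A).image (dvec w)).erase 0) (dvec w p)
        = 3 * 2 ^ (m + A.card - 2)) := by
  obtain ⟨a, b⟩ := p
  by_cases hb0 : b = 0
  · subst hb0
    by_cases ha0 : a = 0
    · subst ha0
      exact Or.inl ⟨rfl, wt_of_zero w A⟩
    · -- shape (a, 0)
      have hcond : ∀ d1 d2 : Fin m → ZMod 2,
          (dot2 a d1 + dot2 0 d2 = 0 ∧ dot2 0 d1 + dot2 (a + 0) d2 = 0)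
            ↔ (dot2 a d1 = 0 ∧ dot2 a d2 = 0) := by
        intro d1 d2
        rw [dot2_zero_left, dot2_zero_left, add_zero, add_zero, zero_add]
      by_cases hclass : ∀ i ∈ A, a i = 0
      · exact Or.inr (Or.inl ⟨⟨a, ha0, hclass, Or.inl rfl⟩,
          wt_of_diag_full hm hF w hw A ha0 hclass hcond⟩)
      · push_neg at hclass
        obtain ⟨i0, hi0, hci0⟩ := hclass
        refine Or.inr (Or.inr ⟨?_, wt_of_diag_half hm hF w hw A i0 hi0 hci0 hcond⟩)
        rintro (hp0 | ⟨c, hc, hcA, hshape | hshape | hshape⟩)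
        · exact ha0 (congrArg Prod.fst hp0)
        · rw [Prod.mk.injEq] at hshape
          exact hci0 (hshape.1 ▸ hcA i0 hi0)
        · rw [Prod.mk.injEq] at hshape
          exact ha0 hshape.1
        · rw [Prod.mk.injEq] at hshape
          exact hc hshape.2.symm
  · by_cases ha0 : a = 0
    · subst ha0
      -- shape (0, b)
      have hcond : ∀ d1 d2 : Fin m → ZMod 2,
          (dot2 0 d1 + dot2 b d2 = 0 ∧ dot2 b d1 + dot2 (0 + b) d2 = 0)
            ↔ (dot2 b d1 = 0 ∧ dot2 b d2 = 0) := by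
        intro d1 d2
        rw [dot2_zero_left, zero_add, zero_add]
        constructor
        · rintro ⟨h1, h2⟩
          rw [h1, add_zero] at h2
          exact ⟨h2, h1⟩
        · rintro ⟨h1, h2⟩
          rw [h1, h2, add_zero]
          exact ⟨rfl, rfl⟩
      by_cases hclass : ∀ i ∈ A, b i = 0
      · exact Or.inr (Or.inl ⟨⟨b, hb0, hclass, Or.inr (Or.inl rfl)⟩,
          wt_of_diag_full hm hF w hw A hb0 hclass hcond⟩)
      · push_neg at hclass
        obtain ⟨i0, hi0, hci0⟩ := hclass
        refine Or.inr (Or.inr ⟨?_, wt_of_diag_half hm hF w hw A i0 hi0 hci0 hcond⟩)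
        rintro (hp0 | ⟨c, hc, hcA, hshape | hshape | hshape⟩)
        · exact hb0 (congrArg Prod.snd hp0)
        · rw [Prod.mk.injEq] at hshape
          exact hb0 hshape.2
        · rw [Prod.mk.injEq] at hshape
          exact hci0 (hshape.2 ▸ hcA i0 hi0)
        · rw [Prod.mk.injEq] at hshape
          exact hc hshape.1.symm
    · by_cases hab : a = b
      · subst hab
        -- shape (a, a)
        have haa : a + a = 0 := funext fun i => zmod2_self_add (a i)
        have hcond : ∀ d1 d2 : Fin m → ZMod 2,
            (dot2 a d1 + dot2 a d2 = 0 ∧ dot2 a d1 + dot2 (a + a) d2 = 0)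
              ↔ (dot2 a d1 = 0 ∧ dot2 a d2 = 0) := by
          intro d1 d2
          rw [haa, dot2_zero_left, add_zero]
          constructor
          · rintro ⟨h1, h2⟩
            rw [h2, zero_add] at h1
            exact ⟨h2, h1⟩
          · rintro ⟨h1, h2⟩
            rw [h1, h2, add_zero]
            exact ⟨rfl, rfl⟩
        by_cases hclass : ∀ i ∈ A, a i = 0
        · exact Or.inr (Or.inl ⟨⟨a, ha0, hclass, Or.inr (Or.inr rfl)⟩,
            wt_of_diag_full hm hF w hw A ha0 hclass hcond⟩)
        · push_neg at hclass
          obtain ⟨i0, hi0, hci0⟩ := hclass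
          refine Or.inr (Or.inr ⟨?_, wt_of_diag_half hm hF w hw A i0 hi0 hci0 hcond⟩)
          rintro (hp0 | ⟨c, hc, hcA, hshape | hshape | hshape⟩)
          · exact ha0 (congrArg Prod.fst hp0)
          · rw [Prod.mk.injEq] at hshape
            exact ha0 hshape.2
          · rw [Prod.mk.injEq] at hshape
            exact ha0 hshape.1
          · rw [Prod.mk.injEq] at hshape
            exact hci0 (hshape.1 ▸ hcA i0 hi0)
      · -- independent
        refine Or.inr (Or.inr ⟨?_, wt_of_indep hF w hw A ha0 hb0 hab⟩)
        rintro (hp0 | ⟨c, hc, hcA, hshape | hshape | hshape⟩)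
        · exact ha0 (congrArg Prod.fst hp0)
        · rw [Prod.mk.injEq] at hshape
          exact hb0 hshape.2
        · rw [Prod.mk.injEq] at hshape
          exact ha0 hshape.1
        · rw [Prod.mk.injEq] at hshape
          exact hab (hshape.1.trans hshape.2.symm)

def lowC {m : ℕ} (A : Finset (Fin m)) : Finset (Fin m → ZMod 2) :=
  Finset.univ.filter fun c => c ≠ 0 ∧ ∀ i ∈ A, c i = 0

def lowSet {m : ℕ} (A : Finset (Fin m)) :
    Finset ((Fin m → ZMod 2) × (Fin m → ZMod 2)) :=
  ((lowC A).image (fun c => (c, 0)) ∪ (lowC A).image (fun c => (0, c)))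
    ∪ (lowC A).image (fun c => (c, c))

lemma mem_lowSet_iff {m : ℕ} (A : Finset (Fin m)) (p) :
    p ∈ lowSet A ↔ lowP A p := by
  simp only [lowSet, lowC, Finset.mem_union, Finset.mem_image, Finset.mem_filter,
    Finset.mem_univ, true_and, lowP]
  constructor
  · rintro ((⟨c, ⟨hc, hcA⟩, rfl⟩ | ⟨c, ⟨hc, hcA⟩, rfl⟩) | ⟨c, ⟨hc, hcA⟩, rfl⟩)
    · exact ⟨c, hc, hcA, Or.inl rfl⟩
    · exact ⟨c, hc, hcA, Or.inr (Or.inl rfl)⟩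
    · exact ⟨c, hc, hcA, Or.inr (Or.inr rfl)⟩
  · rintro ⟨c, hc, hcA, h | h | h⟩
    · exact Or.inl (Or.inl ⟨c, ⟨hc, hcA⟩, h.symm⟩)
    · exact Or.inl (Or.inr ⟨c, ⟨hc, hcA⟩, h.symm⟩)
    · exact Or.inr ⟨c, ⟨hc, hcA⟩, h.symm⟩

lemma lowC_card {m : ℕ} (A : Finset (Fin m)) : (lowC A).card = 2 ^ (m - A.card) - 1 := by
  have hC : lowC A = (delta Aᶜ).erase 0 := by
    ext c
    simp only [lowC, Finset.mem_filter, Finset.mem_univ, true_and, Finset.mem_erase,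
      delta]
    simp only [supp]
    constructor
    · rintro ⟨hc, hcA⟩
      refine ⟨hc, fun i hi => ?_⟩
      simp only [Finset.mem_filter, Finset.mem_univ, true_and] at hi
      rw [Finset.mem_compl]
      intro hiA
      exact hi (hcA i hiA)
    · rintro ⟨hc, hsub⟩
      refine ⟨hc, fun i hiA => ?_⟩
      by_contra hne
      have : i ∈ Aᶜ := hsub (Finset.mem_filter.mpr ⟨Finset.mem_univ _, hne⟩)
      exact (Finset.mem_compl.mp this) hiA
  rw [hC, Finset.card_erase_of_mem (zero_mem_delta _), delta_card, Finset.card_compl,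
    Fintype.card_fin]

lemma not_lowP_zero {m : ℕ} (A : Finset (Fin m)) : ¬ lowP A 0 := by
  rintro ⟨c, hc, -, h | h | h⟩
  · exact hc (by simpa using congrArg Prod.fst h.symm)
  · exact hc (by simpa using congrArg Prod.snd h.symm)
  · exact hc (by simpa using congrArg Prod.fst h.symm)

lemma lowSet_card {m : ℕ} (A : Finset (Fin m)) :
    (lowSet A).card = 3 * (2 ^ (m - A.card) - 1) := by
  have hinj1 : Function.Injective (fun c : Fin m → ZMod 2 => ((c, 0) : _ × (Fin m → ZMod 2))) :=
    fun x y h => congrArg Prod.fst h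
  have hinj2 : Function.Injective (fun c : Fin m → ZMod 2 => ((0, c) : (Fin m → ZMod 2) × _)) :=
    fun x y h => congrArg Prod.snd h
  have hinj3 : Function.Injective (fun c : Fin m → ZMod 2 => (c, c)) :=
    fun x y h => congrArg Prod.fst h
  have hd12 : Disjoint ((lowC A).image (fun c => (c, 0)))
      ((lowC A).image (fun c => ((0 : Fin m → ZMod 2), c))) := by
    rw [Finset.disjoint_left]
    rintro p hp1 hp2
    obtain ⟨c, hc, rfl⟩ := Finset.mem_image.mp hp1
    obtain ⟨c', hc', heq⟩ := Finset.mem_image.mp hp2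
    simp only [lowC, Finset.mem_filter] at hc hc'
    exact hc'.2.1 (congrArg Prod.snd heq)
  have hd3 : Disjoint (((lowC A).image (fun c => (c, 0)))
      ∪ ((lowC A).image (fun c => ((0 : Fin m → ZMod 2), c))))
      ((lowC A).image (fun c => (c, c))) := by
    rw [Finset.disjoint_left]
    rintro p hp1 hp2
    obtain ⟨c, hc, rfl⟩ := Finset.mem_image.mp hp2
    simp only [lowC, Finset.mem_filter] at hc
    rcases Finset.mem_union.mp hp1 with h | h
    · obtain ⟨c', hc', heq⟩ := Finset.mem_image.mp h
      exact hc.2.1 (congrArg Prod.snd heq).symm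
    · obtain ⟨c', hc', heq⟩ := Finset.mem_image.mp h
      exact hc.2.1 (congrArg Prod.fst heq).symm
  rw [lowSet, Finset.card_union_of_disjoint hd3, Finset.card_union_of_disjoint hd12,
    Finset.card_image_of_injective _ hinj1, Finset.card_image_of_injective _ hinj2,
    Finset.card_image_of_injective _ hinj3, lowC_card]
  ring

/-- Corollary 4.3: for `A ⊊ [m]` with `m + |A| ≥ 2` and `D = F_2^m + wΔ_A`, the code
`C_{D^*}` is a `[2^{m+|A|}−1, m, 2^{m+|A|−1}]` two-weight quaternary code with the stated
weight distribution. -/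
theorem quaternary_code_full_space_and_complex {m : ℕ} (hm : 1 ≤ m)
    (hF : Fintype.card F = 4) (w : F) (hw : w ^ 2 + w + 1 = 0)
    (A : Finset (Fin m)) (hA : A ≠ Finset.univ) (hmA : 2 ≤ m + A.card) :
    (((Finset.univ ×ˢ delta A).image (dvec w)).erase 0).card = 2 ^ (m + A.card) - 1
    ∧ (Finset.univ.image
        (fun x : Fin m → F => codeword (((Finset.univ ×ˢ delta A).image (dvec w)).erase 0) x)).card
      = 4 ^ m
    ∧ ((∀ x : Fin m → F, wtF (((Finset.univ ×ˢ delta A).image (dvec w)).erase 0) x = 0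
          ∨ 2 ^ (m + A.card - 1) ≤ wtF (((Finset.univ ×ˢ delta A).image (dvec w)).erase 0) x)
        ∧ (∃ x : Fin m → F,
            wtF (((Finset.univ ×ˢ delta A).image (dvec w)).erase 0) x = 2 ^ (m + A.card - 1)))
    ∧ (Finset.univ.val.map
        (fun x : Fin m → F => wtF (((Finset.univ ×ˢ delta A).image (dvec w)).erase 0) x))
      = Multiset.replicate 1 0
        + Multiset.replicate (3 * (2 ^ (m - A.card) - 1)) (2 ^ (m + A.card - 1))
        + Multiset.replicate (4 ^ m - 1 - 3 * (2 ^ (m - A.card) - 1)) (3 * 2 ^ (m + A.card - 2))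
    ∧ ((Finset.univ.image
        (fun x : Fin m → F =>
          wtF (((Finset.univ ×ˢ delta A).image (dvec w)).erase 0) x)).erase 0).card = 2 := by
  classical
  have hm2 : 2 ≤ m := by
    have hlt : A.card < m := by
      have := Finset.card_lt_card ((Finset.subset_univ A).ssubset_of_ne hA)
      simpa using this
    omega
  -- numeric facts
  have hX : (0:ℕ) < 2 ^ (m + A.card - 2) := pow_pos (by norm_num) _
  have heq1 : (2:ℕ) ^ (m + A.card - 1) = 2 ^ (m + A.card - 2) * 2 := by
    rw [← pow_succ]; congr 1; omega
  have hlv0 : (2:ℕ) ^ (m + A.card - 1) ≠ 0 := by positivity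
  have hhv0 : 3 * (2:ℕ) ^ (m + A.card - 2) ≠ 0 := by positivity
  have hlvhv : (2:ℕ) ^ (m + A.card - 1) ≠ 3 * 2 ^ (m + A.card - 2) := by omega
  have hsurj := (dvec_bij (m := m) hF w hw).2
  have hinj := dvec_inj (m := m) hF w hw
  have hcls := fun p => wt_classify hm hF w hw A p
  -- iff forms
  have hw0iff : ∀ p : (Fin m → ZMod 2) × (Fin m → ZMod 2),
      wtF (((Finset.univ ×ˢ delta A).image (dvec w)).erase 0) (dvec w p) = 0 ↔ p = 0 := by
    intro p
    constructor
    · intro h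
      rcases hcls p with hc | hc | hc
      · exact hc.1
      · exact absurd (hc.2.symm.trans h) hlv0
      · exact absurd (hc.2.symm.trans h) hhv0
    · rintro rfl
      exact wt_of_zero w A
  have hwliff : ∀ p : (Fin m → ZMod 2) × (Fin m → ZMod 2),
      wtF (((Finset.univ ×ˢ delta A).image (dvec w)).erase 0) (dvec w p)
        = 2 ^ (m + A.card - 1) ↔ lowP A p := by
    intro p
    constructor
    · intro h
      rcases hcls p with hc | hc | hc
      · exact absurd (hc.2.symm.trans h).symm hlv0
      · exact hc.1
      · exact absurd (hc.2.symm.trans h).symm hlvhv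
    · intro hl
      rcases hcls p with hc | hc | hc
      · exact absurd (hc.1 ▸ hl) (not_lowP_zero A)
      · exact hc.2
      · exact absurd (Or.inr hl) hc.1
  have hwhiff : ∀ p : (Fin m → ZMod 2) × (Fin m → ZMod 2),
      wtF (((Finset.univ ×ˢ delta A).image (dvec w)).erase 0) (dvec w p)
        = 3 * 2 ^ (m + A.card - 2) ↔ ¬(p = 0 ∨ lowP A p) := by
    intro p
    constructor
    · intro h
      rcases hcls p with hc | hc | hc
      · exact absurd (hc.2.symm.trans h).symm hhv0
      · exact absurd (hc.2.symm.trans h) hlvhv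
      · exact hc.1
    · intro hn
      rcases hcls p with hc | hc | hc
      · exact absurd (Or.inl hc.1) hn
      · exact absurd (Or.inr hc.1) hn
      · exact hc.2
  -- transfer of filter cards
  have htrans : ∀ k : ℕ,
      (Finset.univ.filter fun x : Fin m → F =>
        wtF (((Finset.univ ×ˢ delta A).image (dvec w)).erase 0) x = k).card
      = (Finset.univ.filter fun p : (Fin m → ZMod 2) × (Fin m → ZMod 2) =>
          wtF (((Finset.univ ×ˢ delta A).image (dvec w)).erase 0) (dvec w p) = k).card := by
    intro k
    conv_lhs => rw [← Finset.image_univ_of_surjective hsurj]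
    rw [Finset.filter_image, Finset.card_image_of_injective _ hinj]
  -- pair-side filter identities
  have hf0 : (Finset.univ.filter fun p : (Fin m → ZMod 2) × (Fin m → ZMod 2) =>
      wtF (((Finset.univ ×ˢ delta A).image (dvec w)).erase 0) (dvec w p) = 0)
      = {0} := by
    ext p
    simp only [Finset.mem_filter, Finset.mem_univ, true_and, Finset.mem_singleton]
    exact hw0iff p
  have hfl : (Finset.univ.filter fun p : (Fin m → ZMod 2) × (Fin m → ZMod 2) =>
      wtF (((Finset.univ ×ˢ delta A).image (dvec w)).erase 0) (dvec w p)
        = 2 ^ (m + A.card - 1))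
      = lowSet A := by
    ext p
    simp only [Finset.mem_filter, Finset.mem_univ, true_and]
    rw [mem_lowSet_iff]
    exact hwliff p
  have huniv4 : (Finset.univ : Finset ((Fin m → ZMod 2) × (Fin m → ZMod 2))).card
      = 4 ^ m := by
    rw [Finset.card_univ, Fintype.card_prod, Fintype.card_fun, ZMod.card, Fintype.card_fin,
      show (4:ℕ) = 2 * 2 from rfl, mul_pow]
  have hzero_not_low : (0 : (Fin m → ZMod 2) × (Fin m → ZMod 2)) ∉ lowSet A := by
    rw [mem_lowSet_iff]
    exact not_lowP_zero A
  have hfh : (Finset.univ.filter fun p : (Fin m → ZMod 2) × (Fin m → ZMod 2) =>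
      wtF (((Finset.univ ×ˢ delta A).image (dvec w)).erase 0) (dvec w p)
        = 3 * 2 ^ (m + A.card - 2)).card
      = 4 ^ m - 1 - 3 * (2 ^ (m - A.card) - 1) := by
    have hsplit := Finset.card_filter_add_card_filter_not
      (s := (Finset.univ : Finset ((Fin m → ZMod 2) × (Fin m → ZMod 2))))
      (fun p => wtF (((Finset.univ ×ˢ delta A).image (dvec w)).erase 0) (dvec w p)
        = 3 * 2 ^ (m + A.card - 2))
    have hneg : (Finset.univ.filter fun p : (Fin m → ZMod 2) × (Fin m → ZMod 2) =>
        ¬(wtF (((Finset.univ ×ˢ delta A).image (dvec w)).erase 0) (dvec w p)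
          = 3 * 2 ^ (m + A.card - 2)))
        = insert 0 (lowSet A) := by
      ext p
      simp only [Finset.mem_filter, Finset.mem_univ, true_and, Finset.mem_insert,
        mem_lowSet_iff]
      constructor
      · intro hph
        rcases hcls p with hc | hc | hc
        · exact Or.inl hc.1
        · exact Or.inr hc.1
        · exact absurd hc.2 hph
      · rintro (rfl | hl)
        · rw [(hw0iff 0).mpr rfl]
          exact fun h => hhv0 h.symm
        · rw [(hwliff p).mpr hl]
          exact hlvhv
    have hcins : (insert (0 : (Fin m → ZMod 2) × (Fin m → ZMod 2)) (lowSet A)).card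
        = 3 * (2 ^ (m - A.card) - 1) + 1 := by
      rw [Finset.card_insert_of_notMem hzero_not_low, lowSet_card]
    rw [hneg, hcins, huniv4] at hsplit
    omega
  have hfk : ∀ k : ℕ, k ≠ 0 → k ≠ 2 ^ (m + A.card - 1) → k ≠ 3 * 2 ^ (m + A.card - 2) →
      (Finset.univ.filter fun p : (Fin m → ZMod 2) × (Fin m → ZMod 2) =>
        wtF (((Finset.univ ×ˢ delta A).image (dvec w)).erase 0) (dvec w p) = k)
      = ∅ := by
    intro k hk0 hkl hkh
    rw [Finset.filter_eq_empty_iff]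
    intro p _
    rcases hcls p with hc | hc | hc
    · exact fun h => hk0 (h.symm.trans hc.2)
    · exact fun h => hkl (h.symm.trans hc.2)
    · exact fun h => hkh (h.symm.trans hc.2)
  -- positivity of the high class
  have hhpos : 0 < 4 ^ m - 1 - 3 * (2 ^ (m - A.card) - 1) := by
    have h1 : (2:ℕ) ^ (m - A.card) ≤ 2 ^ m := Nat.pow_le_pow_right (by norm_num) (by omega)
    have h2 : (4:ℕ) ≤ 2 ^ m := by
      calc (4:ℕ) = 2 ^ 2 := rfl
        _ ≤ 2 ^ m := Nat.pow_le_pow_right (by norm_num) hm2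
    have h3 : (2:ℕ) ^ m * 4 ≤ 4 ^ m := by
      calc (2:ℕ) ^ m * 4 ≤ 2 ^ m * 2 ^ m := Nat.mul_le_mul_left _ h2
        _ = 4 ^ m := by rw [show (4:ℕ) = 2 * 2 from rfl, mul_pow]
    omega
  -- the low-weight witness
  have hexi0 : ∃ i0, i0 ∉ A := by
    by_contra h
    push_neg at h
    exact hA (Finset.eq_univ_iff_forall.mpr h)
  obtain ⟨i0, hi0⟩ := hexi0
  have hc0ne : (Pi.single i0 1 : Fin m → ZMod 2) ≠ 0 := by
    intro h
    have := congrFun h i0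
    simp [Pi.single_apply] at this
  have hc0A : ∀ i ∈ A, (Pi.single i0 1 : Fin m → ZMod 2) i = 0 := by
    intro i hi
    have hne : i ≠ i0 := fun h => hi0 (h ▸ hi)
    simp [Pi.single_apply, hne]
  have hlowP : lowP A ((Pi.single i0 1 : Fin m → ZMod 2), (0 : Fin m → ZMod 2)) :=
    ⟨Pi.single i0 1, hc0ne, hc0A, Or.inl rfl⟩
  refine ⟨?_, ?_, ⟨?_, ?_⟩, ?_, ?_⟩
  · -- part (i) : length
    have hD : ((Finset.univ ×ˢ delta A).image (dvec w) : Finset (Fin m → F)).card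
        = 2 ^ (m + A.card) := by
      rw [Finset.card_image_of_injective _ hinj, Finset.card_product, Finset.card_univ,
        Fintype.card_fun, ZMod.card, Fintype.card_fin, delta_card, pow_add]
    have h0mem : (0 : Fin m → F) ∈ (Finset.univ ×ˢ delta A).image (dvec w) := by
      refine Finset.mem_image.mpr ⟨(0, 0), ?_, dvec_zero w⟩
      exact Finset.mem_product.mpr ⟨Finset.mem_univ _, zero_mem_delta A⟩
    rw [Finset.card_erase_of_mem h0mem, hD]
  · -- part (ii) : 4^m codewords
    have hcwinj : Function.Injective (fun x : Fin m → F =>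
        codeword (((Finset.univ ×ˢ delta A).image (dvec w)).erase 0) x) := by
      intro x y hxy
      have hall : ∀ d ∈ ((Finset.univ ×ˢ delta A).image (dvec w)).erase 0,
          dotF x d = dotF y d := by
        intro d hd
        exact congrFun hxy ⟨d, hd⟩
      obtain ⟨p, hp⟩ := hsurj (x - y)
      have hwt : wtF (((Finset.univ ×ˢ delta A).image (dvec w)).erase 0) (x - y) = 0 := by
        rw [wtF, Finset.card_eq_zero, Finset.filter_eq_empty_iff]
        intro d hd
        have hdsub : dotF (x - y) d = dotF x d - dotF y d := by
          simp [dotF, sub_mul, Finset.sum_sub_distrib]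
        intro hne
        exact hne (by rw [hdsub, hall d hd, sub_self])
      rw [← hp] at hwt
      have hp0 := (hw0iff p).mp hwt
      rw [hp0, dvec_zero w] at hp
      exact sub_eq_zero.mp hp.symm
    rw [Finset.card_image_of_injective _ hcwinj, Finset.card_univ, Fintype.card_fun, hF,
      Fintype.card_fin]
  · -- part (iii-a) : minimum distance lower bound
    intro x
    obtain ⟨p, rfl⟩ := hsurj x
    rcases hcls p with hc | hc | hc
    · exact Or.inl hc.2
    · exact Or.inr (le_of_eq hc.2.symm)
    · refine Or.inr ?_
      rw [hc.2]
      omega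
  · -- part (iii-b) : minimum distance attained
    exact ⟨dvec w ((Pi.single i0 1 : Fin m → ZMod 2), 0), (hwliff _).mpr hlowP⟩
  · -- part (iv) : weight distribution
    rw [Multiset.ext]
    intro k
    rw [Multiset.count_map, Multiset.count_add, Multiset.count_add,
      Multiset.count_replicate, Multiset.count_replicate, Multiset.count_replicate]
    have hcnt : (Multiset.filter (fun x : Fin m → F =>
        k = wtF (((Finset.univ ×ˢ delta A).image (dvec w)).erase 0) x)
          (Finset.univ.val)).card
        = (Finset.univ.filter fun x : Fin m → F =>
            wtF (((Finset.univ ×ˢ delta A).image (dvec w)).erase 0) x = k).card := by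
      rw [← Finset.filter_val]
      show (Finset.univ.filter fun x : Fin m → F =>
        k = wtF (((Finset.univ ×ˢ delta A).image (dvec w)).erase 0) x).card = _
      congr 1
      exact Finset.filter_congr fun x _ => eq_comm
    rw [hcnt, htrans k]
    by_cases hk0 : k = 0
    · subst hk0
      rw [hf0, if_pos rfl, if_neg hlv0, if_neg hhv0, Finset.card_singleton]
    · by_cases hkl : k = 2 ^ (m + A.card - 1)
      · subst hkl
        rw [hfl, lowSet_card, if_neg (fun h => hk0 h.symm), if_pos rfl, if_neg ?_]
        · omega
        · exact fun h => hlvhv h.symm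
      · by_cases hkh : k = 3 * 2 ^ (m + A.card - 2)
        · subst hkh
          rw [hfh, if_neg (fun h => hk0 h.symm), if_neg (fun h => hkl h.symm), if_pos rfl]
          omega
        · rw [hfk k hk0 hkl hkh, Finset.card_empty,
            if_neg (fun h => hk0 h.symm), if_neg (fun h => hkl h.symm),
            if_neg (fun h => hkh h.symm)]
  · -- part (v) : exactly two nonzero weights
    have himg : (Finset.univ.image fun x : Fin m → F =>
        wtF (((Finset.univ ×ˢ delta A).image (dvec w)).erase 0) x)
        = {0, 2 ^ (m + A.card - 1), 3 * 2 ^ (m + A.card - 2)} := by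
      ext k
      simp only [Finset.mem_image, Finset.mem_univ, true_and, Finset.mem_insert,
        Finset.mem_singleton]
      constructor
      · rintro ⟨x, rfl⟩
        obtain ⟨p, rfl⟩ := hsurj x
        rcases hcls p with hc | hc | hc
        · exact Or.inl hc.2
        · exact Or.inr (Or.inl hc.2)
        · exact Or.inr (Or.inr hc.2)
      · rintro (rfl | rfl | rfl)
        · exact ⟨dvec w (0, 0), wt_of_zero w A⟩
        · exact ⟨dvec w ((Pi.single i0 1 : Fin m → ZMod 2), 0), (hwliff _).mpr hlowP⟩
        · have hpos : 0 < (Finset.univ.filter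
              fun p : (Fin m → ZMod 2) × (Fin m → ZMod 2) =>
                wtF (((Finset.univ ×ˢ delta A).image (dvec w)).erase 0) (dvec w p)
                  = 3 * 2 ^ (m + A.card - 2)).card := by
            rw [hfh]
            exact hhpos
          obtain ⟨p, hp⟩ := Finset.card_pos.mp hpos
          exact ⟨dvec w p, (Finset.mem_filter.mp hp).2⟩
    rw [himg]
    have h0notmem : (0:ℕ) ∉ ({2 ^ (m + A.card - 1), 3 * 2 ^ (m + A.card - 2)} : Finset ℕ) := by
      simp only [Finset.mem_insert, Finset.mem_singleton]
      push_neg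
      exact ⟨fun h => hlv0 h.symm, fun h => hhv0 h.symm⟩
    rw [show ({0, 2 ^ (m + A.card - 1), 3 * 2 ^ (m + A.card - 2)} : Finset ℕ)
        = insert 0 {2 ^ (m + A.card - 1), 3 * 2 ^ (m + A.card - 2)} from rfl,
      Finset.erase_insert h0notmem,
      Finset.card_insert_of_notMem (by simpa using hlvhv), Finset.card_singleton]
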